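/- Suppose P contains d+1 affinely independent points, and let ℓ be a line in ℝ^d (a one-dimensional affine subspace). Then there exists a point x ∈ ℓ minimizing D_P over ℓ (i.e., D_P(x) ≤ D_P(y) for all y ∈ ℓ) such that x lies on some hyperplane determined by P, i.e., x ∈ affineSpan s for some s ∈ S_P. -/

import Mathlib

open scoped Classical

/-- The set `S_P` of `d`-element affinely independent subsets of `P`;
each determines an affine hyperplane of `ℝ^d` (its affine span). -/
noncomputable def hddSet (d : ℕ) (P : Finset (EuclideanSpace ℝ (Fin d))) :
    Finset (Finset (EuclideanSpace ℝ (Fin d))) :=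
  (P.powersetCard d).filter
    (fun s => AffineIndependent ℝ
      (fun x : (s : Set (EuclideanSpace ℝ (Fin d))) => (x : EuclideanSpace ℝ (Fin d))))

/-- Hyperplane distance depth: the sum, over all hyperplanes determined by `P`,
of the Euclidean distance from `q` to the hyperplane. -/
noncomputable def hddDepth (d : ℕ) (P : Finset (EuclideanSpace ℝ (Fin d)))
    (q : EuclideanSpace ℝ (Fin d)) : ℝ :=
  ∑ s ∈ hddSet d P,
    Metric.infDist q
      (affineSpan ℝ (s : Set (EuclideanSpace ℝ (Fin d))) : Set (EuclideanSpace ℝ (Fin d)))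



private lemma hdd_sign_eq {y z : ℝ} (hz : z ≠ 0) (h : |y - z| < |z|) :
    |y| = (if 0 < z then (1:ℝ) else -1) * y := by
  rcases lt_or_gt_of_ne hz with hneg | hpos
  · have hy : y < 0 := by
      have := abs_lt.mp h
      rw [abs_of_neg hneg] at this
      linarith [this.2]
    rw [if_neg (by linarith), abs_of_neg hy]; ring
  · have hy : 0 < y := by
      have := abs_lt.mp h
      rw [abs_of_pos hpos] at this
      linarith [this.1]
    rw [if_pos hpos, abs_of_pos hy]; ring

private lemma hdd_key {ι : Type*} [Fintype ι] (α β : ι → ℝ) (i₀ : ι) (hα : α i₀ ≠ 0) :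
    ∃ t : ℝ, (∀ u : ℝ, ∑ i, |α i * t + β i| ≤ ∑ i, |α i * u + β i|) ∧
      ∃ i, α i * t + β i = 0 := by
  set F : ℝ → ℝ := fun t => ∑ i, |α i * t + β i| with hF
  have hFcont : Continuous F := by
    apply continuous_finset_sum
    intro i _
    exact ((continuous_const.mul continuous_id).add continuous_const).abs
  have hterm : ∀ t i, |α i * t + β i| ≤ F t := by
    intro t i
    exact Finset.single_le_sum (f := fun i => |α i * t + β i|)
      (fun j _ => abs_nonneg _) (Finset.mem_univ i)
  have hαpos : 0 < |α i₀| := abs_pos.mpr hα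
  obtain ⟨R, hR⟩ : ∃ R : ℝ, R = (F 0 + |β i₀|) / |α i₀| + 1 := ⟨_, rfl⟩
  have hR0 : 0 ≤ R := by
    have h1 : 0 ≤ F 0 := (abs_nonneg _).trans (hterm 0 i₀)
    rw [hR]
    positivity
  have hcoer : ∀ t : ℝ, R < |t| → F 0 < F t := by
    intro t ht
    have h1 : |α i₀ * t + β i₀| ≤ F t := hterm t i₀
    have h2 : |α i₀| * |t| - |β i₀| ≤ |α i₀ * t + β i₀| := by
      have := abs_sub_abs_le_abs_sub (α i₀ * t) (-(β i₀))
      simp only [abs_neg, sub_neg_eq_add] at this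
      rw [← abs_mul]
      linarith
    have h3 : (F 0 + |β i₀|) / |α i₀| < |t| := by linarith
    have h4 : F 0 + |β i₀| < |α i₀| * |t| := by
      rw [div_lt_iff₀ hαpos] at h3; linarith
    linarith
  obtain ⟨t₁, ht₁mem, ht₁min⟩ := (isCompact_Icc (a := -R) (b := R)).exists_isMinOn
    ⟨0, Set.mem_Icc.mpr ⟨by linarith, by linarith⟩⟩ hFcont.continuousOn
  have hglobal : ∀ u : ℝ, F t₁ ≤ F u := by
    intro u
    by_cases hu : |u| ≤ R
    · exact ht₁min ⟨neg_le_of_abs_le hu, le_of_abs_le hu⟩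
    · have := hcoer u (not_le.mp hu)
      have h0 : F t₁ ≤ F 0 := ht₁min ⟨by linarith, by linarith⟩
      linarith
  set K : Set ℝ := {t | F t ≤ F t₁} with hK
  have hKne : K.Nonempty := ⟨t₁, by simp [hK]⟩
  have hKbdd : BddAbove K := by
    refine ⟨R, fun t ht => ?_⟩
    by_contra hc
    have : R < |t| := lt_of_lt_of_le (not_le.mp hc) (le_abs_self t)
    have := hcoer t this
    have := hglobal 0
    have hFt : F t ≤ F t₁ := ht
    have := hglobal t
    linarith
  have hKclosed : IsClosed K := isClosed_le hFcont continuous_const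
  set t₀ : ℝ := sSup K with ht₀
  have ht₀K : t₀ ∈ K := hKclosed.csSup_mem hKne hKbdd
  have ht₀le : F t₀ ≤ F t₁ := ht₀K
  have ht₀min : ∀ u, F t₀ ≤ F u := fun u => le_trans ht₀le (hglobal u)
  refine ⟨t₀, ht₀min, ?_⟩
  by_contra hcon
  push_neg at hcon
  set ε : ℝ := Finset.univ.inf' ⟨i₀, Finset.mem_univ i₀⟩ (fun i => |α i * t₀ + β i| / (|α i| + 1)) with hε
  have hεpos : 0 < ε := by
    rw [hε]; refine (Finset.lt_inf'_iff _).2 ?_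
    intro i _
    have : 0 < |α i * t₀ + β i| := abs_pos.mpr (hcon i)
    positivity
  have hsign : ∀ i, ∀ t : ℝ, |t - t₀| ≤ ε →
      |α i * t + β i| = (if 0 < α i * t₀ + β i then (1:ℝ) else -1) * (α i * t + β i) := by
    intro i t ht
    apply hdd_sign_eq (hcon i)
    have h1 : |α i * t + β i - (α i * t₀ + β i)| = |α i| * |t - t₀| := by
      rw [← abs_mul]; ring_nf
    have h2 : ε ≤ |α i * t₀ + β i| / (|α i| + 1) :=
      Finset.inf'_le _ (Finset.mem_univ i)
    have h3 : |α i| * ε < |α i * t₀ + β i| := by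
      have h4 : |α i| * ε ≤ |α i| * (|α i * t₀ + β i| / (|α i| + 1)) :=
        mul_le_mul_of_nonneg_left h2 (abs_nonneg _)
      have h5 : |α i| * (|α i * t₀ + β i| / (|α i| + 1)) < |α i * t₀ + β i| := by
        rw [mul_div_assoc', div_lt_iff₀ (by positivity)]
        have : 0 < |α i * t₀ + β i| := abs_pos.mpr (hcon i)
        nlinarith [abs_nonneg (α i)]
      linarith
    calc |α i * t + β i - (α i * t₀ + β i)| = |α i| * |t - t₀| := h1
      _ ≤ |α i| * ε := mul_le_mul_of_nonneg_left ht (abs_nonneg _)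
      _ < _ := h3
  have hsum : F (t₀ + ε) + F (t₀ - ε) = 2 * F t₀ := by
    have e1 : F (t₀ + ε) = ∑ i, (if 0 < α i * t₀ + β i then (1:ℝ) else -1) * (α i * (t₀ + ε) + β i) :=
      Finset.sum_congr rfl (fun i _ => hsign i _ (by rw [add_sub_cancel_left, abs_of_pos hεpos]))
    have e2 : F (t₀ - ε) = ∑ i, (if 0 < α i * t₀ + β i then (1:ℝ) else -1) * (α i * (t₀ - ε) + β i) :=
      Finset.sum_congr rfl (fun i _ => hsign i _ (by
        rw [sub_sub_cancel_left, abs_neg, abs_of_pos hεpos]))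
    have e3 : F t₀ = ∑ i, (if 0 < α i * t₀ + β i then (1:ℝ) else -1) * (α i * t₀ + β i) :=
      Finset.sum_congr rfl (fun i _ => hsign i _ (by
        rw [sub_self, abs_zero]; exact le_of_lt hεpos))
    rw [e1, e2, e3, ← Finset.sum_add_distrib, Finset.mul_sum]
    exact Finset.sum_congr rfl (fun i _ => by ring)
  have h1 : F t₀ ≤ F (t₀ + ε) := ht₀min _
  have h2 : F t₀ ≤ F (t₀ - ε) := ht₀min _
  have h3 : t₀ + ε ∈ K := by
    have heq : F (t₀ + ε) = F t₀ := by linarith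
    show F (t₀ + ε) ≤ F t₁
    rw [heq]; exact ht₀le
  have h4 : t₀ + ε ≤ t₀ := le_csSup hKbdd h3
  linarith

private lemma hdd_line_formula (d : ℕ) (hd : 1 ≤ d)
    (s : Finset (EuclideanSpace ℝ (Fin d))) (hcard : s.card = d)
    (hind : AffineIndependent ℝ
      (fun x : (s : Set (EuclideanSpace ℝ (Fin d))) => (x : EuclideanSpace ℝ (Fin d))))
    (p v : EuclideanSpace ℝ (Fin d)) :
    ∃ A B : ℝ,
      (∀ t : ℝ, Metric.infDist (t • v +ᵥ p)
          (affineSpan ℝ (s : Set (EuclideanSpace ℝ (Fin d))) :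
            Set (EuclideanSpace ℝ (Fin d))) = |A * t + B|) ∧
      (v ∉ (affineSpan ℝ (s : Set (EuclideanSpace ℝ (Fin d)))).direction → A ≠ 0) := by
  have hsne : s.Nonempty := Finset.card_pos.mp (by omega)
  obtain ⟨q, hq⟩ := hsne
  have hqH : q ∈ affineSpan ℝ (s : Set (EuclideanSpace ℝ (Fin d))) :=
    mem_affineSpan ℝ (by exact_mod_cast hq)
  set H := affineSpan ℝ (s : Set (EuclideanSpace ℝ (Fin d))) with hH
  set D := H.direction with hDdef
  set K := Dᗮ with hKdef
  have hKD : Kᗮ = D := Submodule.orthogonal_orthogonal D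
  have hHne : (H : Set (EuclideanSpace ℝ (Fin d))).Nonempty := ⟨q, hqH⟩
  -- the formula for the distance
  set w : EuclideanSpace ℝ (Fin d) := ↑(Submodule.orthogonalProjectionOnto K (p -ᵥ q)) with hw
  set u : EuclideanSpace ℝ (Fin d) := ↑(Submodule.orthogonalProjectionOnto K v) with hu
  have hformula : ∀ t : ℝ,
      Metric.infDist (t • v +ᵥ p) (H : Set (EuclideanSpace ℝ (Fin d))) = ‖w + t • u‖ := by
    intro t
    set x := t • v +ᵥ p with hx
    have hz : x -ᵥ q = t • v + (p -ᵥ q) := by rw [hx, vadd_vsub_assoc]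
    have hproj : (Submodule.orthogonalProjectionOnto K (x -ᵥ q) : EuclideanSpace ℝ (Fin d)) = w + t • u := by
      rw [hz, map_add, map_smul]
      push_cast
      rw [hw, hu]
      abel
    apply le_antisymm
    · set rest := (x -ᵥ q) - ↑(Submodule.orthogonalProjectionOnto K (x -ᵥ q)) with hrest
      have hrestD : rest ∈ D := by
        rw [← hKD]
        exact Submodule.sub_starProjection_mem_orthogonal (K := K) _
      have hy₀ : rest +ᵥ q ∈ H := AffineSubspace.vadd_mem_of_mem_direction hrestD hqH
      have hdist : dist x (rest +ᵥ q) = ‖w + t • u‖ := by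
        rw [dist_eq_norm_vsub (EuclideanSpace ℝ (Fin d))]
        have : x -ᵥ (rest +ᵥ q) = (x -ᵥ q) - rest := by
          rw [vsub_vadd_eq_vsub_sub]
        rw [this, hrest, sub_sub_cancel, hproj]
      rw [← hdist]
      exact Metric.infDist_le_dist_of_mem hy₀
    · by_contra hlt
      push_neg at hlt
      rw [Metric.infDist_lt_iff hHne] at hlt
      obtain ⟨y, hyH, hdxy⟩ := hlt
      have hyq : y -ᵥ q ∈ D := AffineSubspace.vsub_mem_direction hyH hqH
      have hproj2 : (Submodule.orthogonalProjectionOnto K (x -ᵥ y) : EuclideanSpace ℝ (Fin d)) = w + t • u := by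
        have h1 : x -ᵥ y = (x -ᵥ q) - (y -ᵥ q) := (vsub_sub_vsub_cancel_right x y q).symm
        have h2 : Submodule.orthogonalProjectionOnto K (y -ᵥ q) = 0 :=
          Submodule.orthogonalProjectionOnto_apply_of_mem_orthogonal (by rw [hKD]; exact hyq)
        rw [h1, map_sub, h2]
        push_cast
        rw [hproj]
        simp
      have hle : ‖w + t • u‖ ≤ dist x y := by
        rw [dist_eq_norm_vsub (EuclideanSpace ℝ (Fin d))]
        calc ‖w + t • u‖ = ‖(Submodule.orthogonalProjectionOnto K (x -ᵥ y) : EuclideanSpace ℝ (Fin d))‖ := by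
              rw [hproj2]
          _ ≤ ‖Submodule.orthogonalProjectionOnto K‖ * ‖x -ᵥ y‖ := (Submodule.orthogonalProjectionOnto K).le_opNorm _
          _ ≤ 1 * ‖x -ᵥ y‖ := by
              gcongr
              exact Submodule.orthogonalProjectionOnto_norm_le K
          _ = ‖x -ᵥ y‖ := one_mul _
      linarith
  -- finrank computations
  haveI : Fintype (s : Set (EuclideanSpace ℝ (Fin d))) := FinsetCoe.fintype s
  have hcardcoe : Fintype.card (s : Set (EuclideanSpace ℝ (Fin d))) = (d - 1) + 1 := by
    simp only [Finset.coe_sort_coe, Fintype.card_coe]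
    omega
  have hD : Module.finrank ℝ D = d - 1 := by
    rw [hDdef, hH, direction_affineSpan]
    have := hind.finrank_vectorSpan hcardcoe
    rwa [Subtype.range_coe] at this
  have hK1 : Module.finrank ℝ K = 1 := by
    have htot := Submodule.finrank_add_finrank_orthogonal (K := D)
    rw [hD, finrank_euclideanSpace_fin] at htot
    rw [hKdef]
    omega
  -- case analysis
  by_cases hu0 : u = 0
  · refine ⟨0, ‖w‖, fun t => ?_, fun hv => ?_⟩
    · rw [hformula t, hu0, smul_zero, add_zero, zero_mul, zero_add, abs_of_nonneg (norm_nonneg _)]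
    · exfalso
      apply hv
      rw [← hKD]
      have : Submodule.orthogonalProjectionOnto K v = 0 := by
        ext1
        exact hu0
      exact Submodule.orthogonalProjectionOnto_eq_zero_iff.mp this
  · have huK : u ∈ K := (Submodule.orthogonalProjectionOnto K v).2
    have hwK : w ∈ K := (Submodule.orthogonalProjectionOnto K (p -ᵥ q)).2
    have hspan : Submodule.span ℝ {u} = K := by
      apply Submodule.eq_of_le_of_finrank_le
      · rw [Submodule.span_le, Set.singleton_subset_iff]; exact huK
      · rw [hK1, finrank_span_singleton hu0]
    obtain ⟨c, hc⟩ : ∃ c : ℝ, c • u = w := by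
      have : w ∈ Submodule.span ℝ {u} := by rw [hspan]; exact hwK
      exact Submodule.mem_span_singleton.mp this
    refine ⟨‖u‖, c * ‖u‖, fun t => ?_, fun _ => norm_ne_zero_iff.mpr hu0⟩
    rw [hformula t, ← hc, ← add_smul, norm_smul, Real.norm_eq_abs]
    rw [show ‖u‖ * t + c * ‖u‖ = (c + t) * ‖u‖ by ring, abs_mul, abs_of_nonneg (norm_nonneg u)]
private lemma hdd_exists_nonparallel (d : ℕ) (hd : 1 ≤ d) (P : Finset (EuclideanSpace ℝ (Fin d)))
    (a : Fin (d + 1) → EuclideanSpace ℝ (Fin d)) (ha : AffineIndependent ℝ a)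
    (haP : ∀ i, a i ∈ P) (v : EuclideanSpace ℝ (Fin d)) (hv : v ≠ 0) :
    ∃ s ∈ hddSet d P, v ∉ (affineSpan ℝ (s : Set (EuclideanSpace ℝ (Fin d)))).direction := by
  have inj : Function.Injective a := ha.injective
  set b : Fin d → EuclideanSpace ℝ (Fin d) := fun i => a i.succ -ᵥ a 0 with hbdef
  have hb : LinearIndependent ℝ b := by
    have h0 := (affineIndependent_iff_linearIndependent_vsub ℝ a 0).mp ha
    have einj : Function.Injective
        (fun i : Fin d => (⟨i.succ, Fin.succ_ne_zero i⟩ : {x : Fin (d+1) // x ≠ 0})) := by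
      intro i j hij
      exact Fin.succ_injective _ (Subtype.mk_eq_mk.mp hij)
    have h1 := h0.comp
      (fun i : Fin d => (⟨i.succ, Fin.succ_ne_zero i⟩ : {x : Fin (d+1) // x ≠ 0})) einj
    exact h1
  haveI : Nonempty (Fin d) := ⟨⟨0, by omega⟩⟩
  set B := basisOfLinearIndependentOfCardEqFinrank hb
    (by simp [finrank_euclideanSpace_fin]) with hBdef
  have hB : ⇑B = b := coe_basisOfLinearIndependentOfCardEqFinrank hb _
  by_contra hcon
  push_neg at hcon
  -- for each j, the set of the other d points is in hddSet
  have hsj : ∀ j : Fin (d + 1), Finset.image a (Finset.univ.erase j) ∈ hddSet d P := by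
    intro j
    rw [hddSet, Finset.mem_filter, Finset.mem_powersetCard]
    refine ⟨⟨?_, ?_⟩, ?_⟩
    · intro x hx
      obtain ⟨i, _, rfl⟩ := Finset.mem_image.mp hx
      exact haP i
    · rw [Finset.card_image_of_injective _ inj, Finset.card_erase_of_mem (Finset.mem_univ j),
        Finset.card_univ, Fintype.card_fin]
      omega
    · apply ha.range.mono
      intro x hx
      simp only [Finset.coe_image, Set.mem_image] at hx
      obtain ⟨i, _, rfl⟩ := hx
      exact Set.mem_range_self i
  -- each coordinate of v w.r.t. the basis b vanishes
  have hcoord : ∀ i₀ : Fin d, B.repr v i₀ = 0 := by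
    intro i₀
    have hvdir := hcon _ (hsj i₀.succ)
    rw [direction_affineSpan] at hvdir
    have hle : vectorSpan ℝ ((Finset.image a (Finset.univ.erase i₀.succ) : Finset _) :
        Set (EuclideanSpace ℝ (Fin d))) ≤ Submodule.span ℝ (b '' {i | i ≠ i₀}) := by
      rw [vectorSpan_def, Submodule.span_le]
      rintro z hz
      obtain ⟨x, hx, y, hy, rfl⟩ := hz
      simp only [Finset.coe_image, Set.mem_image, Finset.mem_coe,
        Finset.mem_erase, Finset.mem_univ, and_true] at hx hy
      obtain ⟨m, hm, rfl⟩ := hx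
      obtain ⟨k, hk, rfl⟩ := hy
      have key : ∀ m : Fin (d + 1), m ≠ i₀.succ →
          a m -ᵥ a 0 ∈ Submodule.span ℝ (b '' {i | i ≠ i₀}) := by
        intro m hmne
        by_cases hm0 : m = 0
        · rw [hm0, vsub_self]
          exact Submodule.zero_mem _
        · obtain ⟨i, rfl⟩ := Fin.exists_succ_eq.mpr hm0
          have hine : i ≠ i₀ := fun hi => hmne (by rw [hi])
          exact Submodule.subset_span ⟨i, hine, rfl⟩
      have : a m -ᵥ a k = (a m -ᵥ a 0) - (a k -ᵥ a 0) := (vsub_sub_vsub_cancel_right _ _ _).symm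
      show a m -ᵥ a k ∈ _
      rw [this]
      exact Submodule.sub_mem _ (key m (by simpa using hm)) (key k (by simpa using hk))
    have hvspan : v ∈ Submodule.span ℝ (⇑B '' {i | i ≠ i₀}) := by
      rw [hB]
      exact hle hvdir
    have hsupp := (Module.Basis.mem_span_image B).mp hvspan
    by_contra h0
    exact (hsupp (Finsupp.mem_support_iff.mpr h0)) rfl
  exact hv ((Module.Basis.forall_coord_eq_zero_iff B).mp (fun i => hcoord i))

/-- If `P` contains `d+1` affinely independent points and `ℓ` is a line in `ℝ^d`,
then some point of `ℓ` minimizing the hyperplane distance depth over `ℓ` lies on a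
hyperplane determined by `P`. -/
theorem hddDepth_min_on_line_mem_hyperplane (d : ℕ) (hd : 1 ≤ d)
    (P : Finset (EuclideanSpace ℝ (Fin d)))
    (h : ∃ a : Fin (d + 1) → EuclideanSpace ℝ (Fin d),
      AffineIndependent ℝ a ∧ ∀ i, a i ∈ P)
    (ℓ : AffineSubspace ℝ (EuclideanSpace ℝ (Fin d)))
    (hℓne : (ℓ : Set (EuclideanSpace ℝ (Fin d))).Nonempty)
    (hℓdim : Module.finrank ℝ ℓ.direction = 1) :
    ∃ x ∈ ℓ, (∀ y ∈ ℓ, hddDepth d P x ≤ hddDepth d P y) ∧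
      ∃ s ∈ hddSet d P, x ∈ affineSpan ℝ (s : Set (EuclideanSpace ℝ (Fin d))) := by
  obtain ⟨a, ha, haP⟩ := h
  obtain ⟨p, hp⟩ := hℓne
  -- find a generator of the direction of ℓ
  obtain ⟨v, hv0, hvdir⟩ : ∃ v : EuclideanSpace ℝ (Fin d),
      v ≠ 0 ∧ ℓ.direction = Submodule.span ℝ {v} := by
    have hne : ℓ.direction ≠ ⊥ := by
      intro hbot
      rw [hbot] at hℓdim
      simp at hℓdim
    obtain ⟨v, hvmem, hv0⟩ := Submodule.exists_mem_ne_zero_of_ne_bot hne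
    refine ⟨v, hv0, ?_⟩
    symm
    apply Submodule.eq_of_le_of_finrank_le
    · rw [Submodule.span_le, Set.singleton_subset_iff]; exact hvmem
    · rw [hℓdim, finrank_span_singleton hv0]
  have hmem : ∀ y, y ∈ ℓ ↔ ∃ t : ℝ, y = t • v +ᵥ p := by
    intro y
    rw [← AffineSubspace.vsub_right_mem_direction_iff_mem hp y, hvdir,
      Submodule.mem_span_singleton]
    constructor
    · rintro ⟨t, ht⟩
      exact ⟨t, by rw [ht, vsub_vadd]⟩
    · rintro ⟨t, rfl⟩
      exact ⟨t, (vadd_vsub _ _).symm⟩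
  -- per-hyperplane coefficients
  have hAB : ∀ s ∈ hddSet d P, ∃ A : ℝ, ∃ B : ℝ,
      (∀ t : ℝ, Metric.infDist (t • v +ᵥ p)
          (affineSpan ℝ (s : Set (EuclideanSpace ℝ (Fin d))) :
            Set (EuclideanSpace ℝ (Fin d))) = |A * t + B|) ∧
      (v ∉ (affineSpan ℝ (s : Set (EuclideanSpace ℝ (Fin d)))).direction → A ≠ 0) := by
    intro s hs
    rw [hddSet, Finset.mem_filter, Finset.mem_powersetCard] at hs
    exact hdd_line_formula d hd s hs.1.2 hs.2 p v
  choose! A B hABf hABnz using hAB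
  obtain ⟨s₀, hs₀mem, hs₀⟩ := hdd_exists_nonparallel d hd P a ha haP v hv0
  have hα : A s₀ ≠ 0 := hABnz s₀ hs₀mem hs₀
  obtain ⟨t, htmin, i, hi⟩ := hdd_key (fun i : {s // s ∈ hddSet d P} => A i.1)
    (fun i : {s // s ∈ hddSet d P} => B i.1) ⟨s₀, hs₀mem⟩ hα
  have hdepth : ∀ u : ℝ, hddDepth d P (u • v +ᵥ p) =
      ∑ i : {s // s ∈ hddSet d P}, |A i.1 * u + B i.1| := by
    intro u
    rw [hddDepth, ← Finset.sum_coe_sort (hddSet d P)]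
    exact Finset.sum_congr rfl fun i _ => hABf i.1 i.2 u
  refine ⟨t • v +ᵥ p, (hmem _).mpr ⟨t, rfl⟩, ?_, ?_⟩
  · intro y hy
    obtain ⟨u, rfl⟩ := (hmem y).mp hy
    rw [hdepth, hdepth]
    exact htmin u
  · refine ⟨i.1, i.2, ?_⟩
    have h0 : Metric.infDist (t • v +ᵥ p)
        (affineSpan ℝ ((i.1 : Finset _) : Set (EuclideanSpace ℝ (Fin d))) :
          Set (EuclideanSpace ℝ (Fin d))) = 0 := by
      rw [hABf i.1 i.2 t, hi, abs_zero]
    have hcard : (i.1 : Finset _).card = d := by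
      have hs := i.2
      simp only [hddSet, Finset.mem_filter, Finset.mem_powersetCard] at hs
      exact hs.1.2
    have hsne : (i.1 : Finset _).Nonempty := Finset.card_pos.mp (by omega)
    have hne : ((affineSpan ℝ ((i.1 : Finset _) : Set (EuclideanSpace ℝ (Fin d)))) :
        Set (EuclideanSpace ℝ (Fin d))).Nonempty := by
      rw [affineSpan_nonempty]
      exact_mod_cast hsne
    exact ((AffineSubspace.closed_of_finiteDimensional _).mem_iff_infDist_zero hne).mpr h0
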